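/- There exists a constant δ' = δ'(d) ∈ (0,1) such that the following holds for every choice of points x^{(i,+)} ∈ [−δ', δ']^d + e_i and x^{(i,−)} ∈ [−δ', δ']^d − e_i for i = 1, …, d. The polar dual P* := { y ∈ ℝ^d : x·y ≤ 1 for all x ∈ P } of the convex polytope P := conv( x^{(1,+)}, x^{(1,−)}, …, x^{(d,+)}, x^{(d,−)} ) satisfies P* ⊆ B_{2√d}(0). -/

import Mathlib

noncomputable section

open Metric

/-- **Polar duals of perturbed cross-polytopes are bounded.**
There is a constant `δ' = δ'(d) ∈ (0,1)` such that the following holds for every choice of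
points `x^{(i,+)} ∈ [-δ',δ']^d + e_i` and `x^{(i,-)} ∈ [-δ',δ']^d - e_i`, `i = 1,…,d`.
The polar dual `P* = {y : x·y ≤ 1 ∀ x ∈ P}` of the convex polytope
`P = conv(x^{(1,+)}, x^{(1,-)}, …, x^{(d,+)}, x^{(d,-)})` satisfies `P* ⊆ B_{2√d}(0)`. -/
theorem polar_dual_bounded (d : ℕ) :
    ∃ δ' : ℝ, δ' ∈ Set.Ioo (0 : ℝ) 1 ∧
      ∀ (xp xm : Fin d → EuclideanSpace ℝ (Fin d)),
        (∀ i j, |xp i j - (EuclideanSpace.single i (1 : ℝ)) j| ≤ δ') →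
        (∀ i j, |xm i j - (-(EuclideanSpace.single i (1 : ℝ))) j| ≤ δ') →
        {y : EuclideanSpace ℝ (Fin d) |
            ∀ x ∈ convexHull ℝ (Set.range xp ∪ Set.range xm), (inner ℝ x y : ℝ) ≤ 1}
          ⊆ closedBall 0 (2 * Real.sqrt d) := by
  set δ : ℝ := 1 / (2 * d + 2) with hδdef
  have hδpos : 0 < δ := by positivity
  have hδlt : δ < 1 := by
    rw [hδdef, div_lt_one (by positivity)]
    have : (0:ℝ) ≤ d := Nat.cast_nonneg d
    linarith
  refine ⟨δ, ⟨hδpos, hδlt⟩, ?_⟩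
  intro xp xm hxp hxm y hy
  simp only [Set.mem_setOf_eq] at hy
  -- basic facts
  have hp : ∀ i, (inner ℝ (xp i) y : ℝ) ≤ 1 := fun i =>
    hy _ (subset_convexHull ℝ _ (Or.inl ⟨i, rfl⟩))
  have hm : ∀ i, (inner ℝ (xm i) y : ℝ) ≤ 1 := fun i =>
    hy _ (subset_convexHull ℝ _ (Or.inr ⟨i, rfl⟩))
  set S : ℝ := ∑ j, |y j| with hS
  have hSnonneg : 0 ≤ S := Finset.sum_nonneg fun j _ => abs_nonneg _
  -- key coordinate bound
  have hkey : ∀ i, |y i| ≤ 1 + δ * S := by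
    intro i
    have hinnerp : (inner ℝ (xp i) y : ℝ) = ∑ j, xp i j * y j := by
      rw [PiLp.inner_apply]; simp [RCLike.inner_apply, mul_comm]
    have hinnerm : (inner ℝ (xm i) y : ℝ) = ∑ j, xm i j * y j := by
      rw [PiLp.inner_apply]; simp [RCLike.inner_apply, mul_comm]
    have hsingle : ∀ j : Fin d, (EuclideanSpace.single i (1:ℝ)) j
        = if j = i then 1 else 0 := by
      intro j; simp [EuclideanSpace.single_apply]
    have herr : |∑ j, (xp i j - (EuclideanSpace.single i (1:ℝ)) j) * y j| ≤ δ * S := by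
      calc |∑ j, (xp i j - (EuclideanSpace.single i (1:ℝ)) j) * y j|
          ≤ ∑ j, |(xp i j - (EuclideanSpace.single i (1:ℝ)) j) * y j| :=
            Finset.abs_sum_le_sum_abs _ _
        _ ≤ ∑ j, δ * |y j| := by
            refine Finset.sum_le_sum fun j _ => ?_
            rw [abs_mul]
            exact mul_le_mul_of_nonneg_right (hxp i j) (abs_nonneg _)
        _ = δ * S := by rw [hS, Finset.mul_sum]
    have herrm : |∑ j, (xm i j + (EuclideanSpace.single i (1:ℝ)) j) * y j| ≤ δ * S := by
      calc |∑ j, (xm i j + (EuclideanSpace.single i (1:ℝ)) j) * y j|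
          ≤ ∑ j, |(xm i j + (EuclideanSpace.single i (1:ℝ)) j) * y j| :=
            Finset.abs_sum_le_sum_abs _ _
        _ ≤ ∑ j, δ * |y j| := by
            refine Finset.sum_le_sum fun j _ => ?_
            rw [abs_mul]
            refine mul_le_mul_of_nonneg_right ?_ (abs_nonneg _)
            have := hxm i j
            simpa [sub_neg_eq_add] using this
        _ = δ * S := by rw [hS, Finset.mul_sum]
    have hsum_split : ∑ j, xp i j * y j
        = y i + ∑ j, (xp i j - (EuclideanSpace.single i (1:ℝ)) j) * y j := by
      have : ∑ j, (EuclideanSpace.single i (1:ℝ)) j * y j = y i := by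
        simp [hsingle, Finset.sum_ite_eq', mul_comm]
      rw [← this, ← Finset.sum_add_distrib]
      congr 1; ext j; ring
    have hsum_splitm : ∑ j, xm i j * y j
        = -y i + ∑ j, (xm i j + (EuclideanSpace.single i (1:ℝ)) j) * y j := by
      have : ∑ j, (EuclideanSpace.single i (1:ℝ)) j * y j = y i := by
        simp [hsingle, Finset.sum_ite_eq', mul_comm]
      rw [← this]; simp only [add_mul, Finset.sum_add_distrib]; ring
    have h1 : y i ≤ 1 + δ * S := by
      have := hp i
      rw [hinnerp, hsum_split] at this
      have := abs_le.mp herr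
      linarith [this.1, this.2, hp i]
    have h2 : -y i ≤ 1 + δ * S := by
      have hhp := hm i
      rw [hinnerm, hsum_splitm] at hhp
      have := abs_le.mp herrm
      linarith [this.1, this.2]
    exact abs_le.mpr ⟨by linarith, h1⟩
  -- norm squared bound
  have hnorm2 : ‖y‖ ^ 2 = ∑ j, y j ^ 2 := by
    rw [EuclideanSpace.norm_eq, Real.sq_sqrt (Finset.sum_nonneg fun j _ => sq_nonneg _)]
    simp [sq_abs]
  have h1 : ‖y‖ ^ 2 ≤ S * (1 + δ * S) := by
    rw [hnorm2]
    calc ∑ j, y j ^ 2 ≤ ∑ j, |y j| * (1 + δ * S) := by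
          refine Finset.sum_le_sum fun j _ => ?_
          rw [← sq_abs]
          rw [sq]
          exact mul_le_mul_of_nonneg_left (hkey j) (abs_nonneg _)
      _ = S * (1 + δ * S) := by rw [hS, ← Finset.sum_mul]
  have h2 : S ^ 2 ≤ d * ‖y‖ ^ 2 := by
    rw [hnorm2, hS]
    have := sq_sum_le_card_mul_sum_sq (s := (Finset.univ : Finset (Fin d)))
      (f := fun j => |y j|)
    simpa [sq_abs] using this
  have hδd : δ * d ≤ 1 / 2 := by
    rw [hδdef, div_mul_eq_mul_div, one_mul, div_le_div_iff₀ (by positivity) (by norm_num)]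
    have : (0:ℝ) ≤ d := Nat.cast_nonneg d
    linarith
  -- ‖y‖² ≤ S + δ S² and δ S² ≤ δ d ‖y‖² ≤ ‖y‖²/2
  have h3 : δ * S ^ 2 ≤ ‖y‖ ^ 2 / 2 := by
    have : δ * S ^ 2 ≤ δ * (d * ‖y‖ ^ 2) := by
      exact mul_le_mul_of_nonneg_left h2 (le_of_lt hδpos)
    calc δ * S ^ 2 ≤ δ * (d * ‖y‖ ^ 2) := this
      _ = (δ * d) * ‖y‖ ^ 2 := by ring
      _ ≤ (1/2) * ‖y‖ ^ 2 := mul_le_mul_of_nonneg_right hδd (sq_nonneg _)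
      _ = ‖y‖ ^ 2 / 2 := by ring
  have h4 : ‖y‖ ^ 2 ≤ 2 * S := by nlinarith
  have h5 : S ≤ 2 * d := by nlinarith
  have h6 : ‖y‖ ^ 2 ≤ 4 * d := by nlinarith
  have hfinal : ‖y‖ ≤ 2 * Real.sqrt d := by
    have hsq : (2 * Real.sqrt d) ^ 2 = 4 * d := by
      rw [mul_pow, Real.sq_sqrt (Nat.cast_nonneg d)]; ring
    nlinarith [norm_nonneg y, Real.sqrt_nonneg (d:ℝ)]
  simpa [mem_closedBall, dist_zero_right] using hfinal
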